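/- The first Betti number of Tetra is 1: the ℚ-vector space ℚ ⊗_ℤ (abelianization of Γ_T) is one-dimensional. -/

import Mathlib

noncomputable section

/-- Points of `ℝ³`, written as `(x, y, z)`. -/
abbrev R3 : Type := ℝ × ℝ × ℝ

/-- The translation `T_w : x ↦ x + w` of `ℝ³`, as a bijection (it is an isometry). -/
def transl (w : R3) : Equiv.Perm R3 := Equiv.addRight w

/-- The quarter-turn screw motion `τ(x,y,z) = (−y, x, z+1/2)`, as a bijection
(it is an isometry). -/
def tauE : Equiv.Perm R3 where
  toFun p := (-p.2.1, p.1, p.2.2 + 1/2)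
  invFun p := (p.2.1, -p.1, p.2.2 - 1/2)
  left_inv p := by obtain ⟨x, y, z⟩ := p; simp
  right_inv p := by obtain ⟨x, y, z⟩ := p; simp

/-- The half-turn screw motion `ρ_x(x,y,z) = (x+1/2, −y, −z)`, as a bijection
(it is an isometry). -/
def rhoxE : Equiv.Perm R3 where
  toFun p := (p.1 + 1/2, -p.2.1, -p.2.2)
  invFun p := (p.1 - 1/2, -p.2.1, -p.2.2)
  left_inv p := by obtain ⟨x, y, z⟩ := p; simp
  right_inv p := by obtain ⟨x, y, z⟩ := p; simp

/-- The half-turn screw motion `ρ_y(x,y,z) = (−x, y+1/2, 1−z)`, as a bijection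
(it is an isometry). -/
def rhoyE : Equiv.Perm R3 where
  toFun p := (-p.1, p.2.1 + 1/2, 1 - p.2.2)
  invFun p := (-p.1, p.2.1 - 1/2, 1 - p.2.2)
  left_inv p := by obtain ⟨x, y, z⟩ := p; simp
  right_inv p := by obtain ⟨x, y, z⟩ := p; simp

/-- `Γ_T`, the covering group of the tetracosm Tetra: the group generated by the
translations `T_{(1,0,0)}, T_{(0,1,0)}, T_{(0,0,2)}` and `τ`. -/
def GammaT : Subgroup (Equiv.Perm R3) :=
  Subgroup.closure {transl (1, 0, 0), transl (0, 1, 0), transl (0, 0, 2), tauE}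

/-- `Γ_D`, the covering group of the didicosm Didi: the group generated by the
translations `T_{(1,0,0)}, T_{(0,1,0)}, T_{(0,0,2)}` and `ρ_x`, `ρ_y`. -/
def GammaD : Subgroup (Equiv.Perm R3) :=
  Subgroup.closure {transl (1, 0, 0), transl (0, 1, 0), transl (0, 0, 2), rhoxE, rhoyE}

end

open scoped TensorProduct

noncomputable section BettiTetraAux

namespace BettiTetra

lemma transl_apply (w p : R3) : transl w p = p + w := rfl
lemma tauE_apply (p : R3) : tauE p = (-p.2.1, p.1, p.2.2 + 1/2) := rfl
lemma tauE_inv_apply (p : R3) : tauE⁻¹ p = (p.2.1, -p.1, p.2.2 - 1/2) := rfl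

/-- The generating set of `Γ_T`. -/
def S : Set (Equiv.Perm R3) := {transl (1, 0, 0), transl (0, 1, 0), transl (0, 0, 2), tauE}

lemma gammaT_eq : GammaT = Subgroup.closure S := rfl

lemma mem_of_mem_S {g : Equiv.Perm R3} (h : g ∈ S) : g ∈ GammaT :=
  Subgroup.subset_closure h

def aT : ↥GammaT := ⟨transl (1, 0, 0), mem_of_mem_S (by left; rfl)⟩
def bT : ↥GammaT := ⟨transl (0, 1, 0), mem_of_mem_S (by right; left; rfl)⟩
def cT : ↥GammaT := ⟨transl (0, 0, 2), mem_of_mem_S (by right; right; left; rfl)⟩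
def tT : ↥GammaT := ⟨tauE, mem_of_mem_S (by right; right; right; rfl)⟩

lemma rel1 : tauE * transl (1, 0, 0) * tauE⁻¹ = transl (0, 1, 0) := by
  apply Equiv.ext; rintro ⟨x, y, z⟩
  simp [transl_apply, tauE_apply, tauE_inv_apply, Equiv.Perm.mul_apply, Prod.ext_iff]

lemma rel2 : tauE * transl (0, 1, 0) * tauE⁻¹ = (transl (1, 0, 0))⁻¹ := by
  have h : (transl (1, 0, 0))⁻¹ = transl (-1, 0, 0) := by
    apply Equiv.ext; rintro ⟨x, y, z⟩
    simp [transl, Prod.ext_iff]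
  rw [h]
  apply Equiv.ext; rintro ⟨x, y, z⟩
  simp [transl_apply, tauE_apply, tauE_inv_apply, Equiv.Perm.mul_apply, Prod.ext_iff]
  ring

lemma rel3 : tauE ^ 4 = transl (0, 0, 2) := by
  apply Equiv.ext; rintro ⟨x, y, z⟩
  simp [transl_apply, tauE_apply, pow_succ, Equiv.Perm.mul_apply, Prod.ext_iff]
  ring

lemma rel1' : tT * aT * tT⁻¹ = bT := Subtype.ext rel1
lemma rel2' : tT * bT * tT⁻¹ = aT⁻¹ := Subtype.ext rel2
lemma rel3' : tT ^ 4 = cT := Subtype.ext rel3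

/-- The abelianization map. -/
abbrev ab : ↥GammaT →* Abelianization ↥GammaT := Abelianization.of

lemma hab1 : ab aT = ab bT := by
  have h := congrArg ab rel1'
  rw [map_mul, map_mul, map_inv] at h
  rwa [mul_comm (ab tT) (ab aT), mul_assoc, mul_inv_cancel, mul_one] at h

lemma hab2 : ab bT = (ab aT)⁻¹ := by
  have h := congrArg ab rel2'
  rw [map_mul, map_mul, map_inv, map_inv] at h
  rwa [mul_comm (ab tT) (ab bT), mul_assoc, mul_inv_cancel, mul_one] at h

lemma hab3 : ab cT = (ab tT) ^ 4 := by
  have h := congrArg ab rel3'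
  rw [map_pow] at h
  exact h.symm

/-- Shorthand for the additivized abelianization. -/
abbrev A : Type := Additive (Abelianization ↥GammaT)

def av (g : ↥GammaT) : A := Additive.ofMul (ab g)


lemma av_add (g h : ↥GammaT) : av (g * h) = av g + av h := by
  unfold av; rw [map_mul]; rfl

lemma av_neg (g : ↥GammaT) : av g⁻¹ = - av g := by
  unfold av; rw [map_inv]; rfl

lemma av_one : av 1 = 0 := by
  unfold av; rw [map_one]; rfl

lemma two_smul_av_a : (2 : ℤ) • av aT = 0 := by
  have h : av aT + av aT = 0 := by
    have heq : ab aT = (ab aT)⁻¹ := hab1.trans hab2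
    have : ab aT * ab aT = 1 := by nth_rewrite 1 [heq]; exact inv_mul_cancel _
    calc av aT + av aT = Additive.ofMul (ab aT * ab aT) := rfl
    _ = Additive.ofMul (1 : Abelianization ↥GammaT) := by rw [this]
    _ = 0 := rfl
  rw [two_smul]; exact h

lemma two_smul_av_b : (2 : ℤ) • av bT = 0 := by
  have h : av aT = av bT := congrArg Additive.ofMul hab1
  rw [← h]; exact two_smul_av_a

lemma av_c : av cT = (4 : ℤ) • av tT := by
  have h : cT = tT * tT * tT * tT := by
    rw [← rel3', pow_succ, pow_succ, pow_succ, pow_one]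
  rw [h, av_add, av_add, av_add]
  module

/-- The linear map `ℚ → ℚ ⊗ A` sending `1` to `1 ⊗ av tT`. -/
def f : ℚ →ₗ[ℚ] ℚ ⊗[ℤ] A := LinearMap.toSpanSingleton ℚ _ ((1 : ℚ) ⊗ₜ[ℤ] av tT)

lemma f_apply (q : ℚ) : f q = q ⊗ₜ[ℤ] av tT := by
  show q • ((1 : ℚ) ⊗ₜ[ℤ] av tT) = q ⊗ₜ[ℤ] av tT
  rw [TensorProduct.smul_tmul', smul_eq_mul, mul_one]

lemma tmul_torsion {m : A} (hm : (2 : ℤ) • m = 0) (q : ℚ) : q ⊗ₜ[ℤ] m = (0 : ℚ ⊗[ℤ] A) := by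
  have hq : q = (2 : ℤ) • (q / 2) := by
    rw [zsmul_eq_mul]; push_cast; ring
  rw [hq, TensorProduct.smul_tmul, hm, TensorProduct.tmul_zero]

lemma range_f : ∀ x : ℚ ⊗[ℤ] A, x ∈ LinearMap.range f := by
  intro x
  induction x using TensorProduct.induction_on with
  | zero => exact zero_mem _
  | add x y hx hy => exact add_mem hx hy
  | tmul q m =>
    obtain ⟨g, rfl⟩ : ∃ g : ↥GammaT, av g = m := by
      obtain ⟨g, hg⟩ := QuotientGroup.mk_surjective (Additive.toMul m)
      exact ⟨g, congrArg Additive.ofMul hg⟩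
    have key : ∀ (x : Equiv.Perm R3) (hx : x ∈ GammaT),
        ∀ q : ℚ, q ⊗ₜ[ℤ] av (⟨x, hx⟩ : ↥GammaT) ∈ LinearMap.range f := by
      intro x hx
      induction hx using Subgroup.closure_induction with
      | mem x hxS =>
        intro q
        rcases hxS with rfl | rfl | rfl | rfl
        · rw [show (⟨transl (1,0,0), _⟩ : ↥GammaT) = aT from rfl,
            tmul_torsion two_smul_av_a q]
          exact zero_mem _
        · rw [show (⟨transl (0,1,0), _⟩ : ↥GammaT) = bT from rfl,
            tmul_torsion two_smul_av_b q]
          exact zero_mem _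
        · rw [show (⟨transl (0,0,2), _⟩ : ↥GammaT) = cT from rfl, av_c]
          refine ⟨4 * q, ?_⟩
          rw [f_apply, ← TensorProduct.smul_tmul]
          congr 1
        · exact ⟨q, by rw [f_apply]; rfl⟩
      | one =>
        intro q
        rw [show (⟨(1 : Equiv.Perm R3), _⟩ : ↥GammaT) = 1 from rfl, av_one,
          TensorProduct.tmul_zero]
        exact zero_mem _
      | mul x y hx hy ihx ihy =>
        intro q
        rw [show (⟨x * y, _⟩ : ↥GammaT) = ⟨x, hx⟩ * ⟨y, hy⟩ from rfl, av_add,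
          TensorProduct.tmul_add]
        exact add_mem (ihx q) (ihy q)
      | inv x hx ih =>
        intro q
        rw [show (⟨x⁻¹, _⟩ : ↥GammaT) = (⟨x, hx⟩)⁻¹ from rfl, av_neg,
          TensorProduct.tmul_neg]
        exact neg_mem (ih q)
    exact key g.1 g.2 q

/-- The z-shift of an element of `Γ_T` is constant. -/
lemma zkey : ∀ g ∈ GammaT, ∀ p : R3, (g p).2.2 = p.2.2 + (g 0).2.2 := by
  intro g hg
  induction hg using Subgroup.closure_induction with
  | mem x hxS =>
    rcases hxS with rfl | rfl | rfl | rfl <;>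
      (rintro ⟨px, py, pz⟩; simp [transl_apply, tauE_apply])
  | one => intro p; simp
  | mul x y hx hy ihx ihy =>
    intro p
    have h1 : ((x * y) p) = x (y p) := rfl
    have h2 : ((x * y) 0) = x (y 0) := rfl
    rw [h1, h2, ihx (y p), ihy p, ihx (y 0)]
    ring
  | inv x hx ih =>
    intro p
    have h1 := ih (x⁻¹ p)
    have h2 := ih (x⁻¹ 0)
    rw [show ∀ q : R3, x (x⁻¹ q) = q from fun q => x.apply_symm_apply q] at h1 h2
    have h3 : ((x⁻¹ : Equiv.Perm R3) 0) = x⁻¹ 0 := rfl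
    have h0 : ((0 : R3)).2.2 = 0 := rfl
    rw [h0] at h2
    linarith

/-- The z-shift group homomorphism. -/
def zhom : ↥GammaT →* Multiplicative ℝ where
  toFun g := Multiplicative.ofAdd ((g.1 0).2.2)
  map_one' := rfl
  map_mul' g h := by
    show Multiplicative.ofAdd ((g.1 (h.1 0)).2.2)
      = Multiplicative.ofAdd ((g.1 0).2.2) * Multiplicative.ofAdd ((h.1 0).2.2)
    rw [← ofAdd_add]
    congr 1
    rw [zkey g.1 g.2 (h.1 0)]
    ring

/-- The induced additive hom out of the abelianization. -/
def phi : A →+ ℝ := MonoidHom.toAdditiveLeft (Abelianization.lift zhom)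

lemma phi_av (g : ↥GammaT) : phi (av g) = (g.1 0).2.2 := rfl

def phiL : A →ₗ[ℤ] ℝ := phi.toIntLinearMap

/-- The bilinear pairing `ℚ × A → ℝ`. -/
def B : ℚ →ₗ[ℤ] A →ₗ[ℤ] ℝ where
  toFun q := q • phiL
  map_add' q r := add_smul q r phiL
  map_smul' n q := smul_assoc n q phiL

def gL : ℚ ⊗[ℤ] A →ₗ[ℤ] ℝ := TensorProduct.lift B

lemma gL_one_t : gL ((1 : ℚ) ⊗ₜ[ℤ] av tT) = 1 / 2 := by
  show (1 : ℚ) • phiL (av tT) = 1 / 2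
  rw [one_smul]
  show phi (av tT) = 1 / 2
  rw [phi_av]
  show ((tauE (0 : R3)).2.2) = 1 / 2
  rw [tauE_apply]
  norm_num

instance : Nontrivial (ℚ ⊗[ℤ] A) := by
  refine ⟨(1 : ℚ) ⊗ₜ[ℤ] av tT, 0, fun h => ?_⟩
  have := congrArg gL h
  rw [gL_one_t, map_zero] at this
  norm_num at this

set_option synthInstance.maxHeartbeats 1000000 in
instance : NoZeroSMulDivisors ℚ (ℚ ⊗[ℤ] A) :=
  GroupWithZero.toNoZeroSMulDivisors

end BettiTetra

end BettiTetraAux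

/-- the first Betti number of Tetra is 1: the ℚ-vector space
`ℚ ⊗_ℤ (abelianization of Γ_T)` is one-dimensional. -/
theorem betti_one_tetra :
    Module.rank ℚ (ℚ ⊗[ℤ] Additive (Abelianization ↥GammaT)) = 1 := by
  have hsurj : Function.Surjective BettiTetra.f := by
    intro x
    exact BettiTetra.range_f x
  have h2 : Module.rank ℚ (ℚ ⊗[ℤ] Additive (Abelianization ↥GammaT)) ≤ 1 := by
    have := BettiTetra.f.rank_le_of_surjective hsurj
    rwa [Module.rank_self] at this
  have h1 : 0 < Module.rank ℚ (ℚ ⊗[ℤ] Additive (Abelianization ↥GammaT)) :=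
    rank_pos_iff_nontrivial.mpr inferInstance
  exact le_antisymm h2 (Cardinal.one_le_iff_pos.mpr h1)
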